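/- The function y(x) = I_0(3,x) = ∑_{r=0}^∞ (x/3)^{3r}/(r!)³ satisfies the ODE x²·y''' + 3x·y'' + y' − x²·y = 0. -/

import Mathlib

open scoped Nat

/-- Re-modified Bessel function of order 0 with parameter 3. -/
noncomputable def remod3 (x : ℝ) : ℝ :=
  ∑' r : ℕ, (x / 3) ^ (3 * r) / (r.factorial : ℝ) ^ 3

/-- Auxiliary: `k`-th termwise derivative of the series. -/
noncomputable def remodF (k r : ℕ) (x : ℝ) : ℝ :=
  ((3 * r).descFactorial k : ℝ) * x ^ (3 * r - k) / (27 ^ r * (r.factorial : ℝ) ^ 3)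

lemma remodF_hasDerivAt (k r : ℕ) (x : ℝ) :
    HasDerivAt (fun y => remodF k r y) (remodF (k + 1) r x) x := by
  have h := ((hasDerivAt_pow (3 * r - k) x).const_mul
      (((3 * r).descFactorial k : ℝ))).div_const ((27 : ℝ) ^ r * (r.factorial : ℝ) ^ 3)
  refine h.congr_deriv ?_
  unfold remodF
  rw [Nat.descFactorial_succ, ← Nat.sub_sub]
  push_cast
  ring

lemma remodF_bound {k : ℕ} (hk : k ≤ 4) {M : ℝ} (hM : 1 ≤ M) {y : ℝ} (hy : |y| ≤ M) (r : ℕ) :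
    ‖remodF k r y‖ ≤ 81 * (16 * M ^ 3 / 27) ^ r / r.factorial := by
  have hM0 : (0 : ℝ) ≤ M := le_trans zero_le_one hM
  have hpow : ((3 * r : ℕ) : ℝ) ^ k ≤ 81 * 16 ^ r := by
    rcases Nat.eq_zero_or_pos r with hr | hr
    · subst hr
      have : ((3 * 0 : ℕ) : ℝ) ^ k ≤ 1 := by
        simp only [Nat.mul_zero, Nat.cast_zero]
        exact pow_le_one₀ le_rfl zero_le_one
      linarith
    · have h1 : (1 : ℝ) ≤ ((3 * r : ℕ) : ℝ) := by
        have : 1 ≤ 3 * r := by omega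
        exact_mod_cast this
      have h2 : ((3 * r : ℕ) : ℝ) ^ k ≤ ((3 * r : ℕ) : ℝ) ^ 4 :=
        pow_le_pow_right₀ h1 hk
      have h3 : ((3 * r : ℕ) : ℝ) ^ 4 = 81 * (r : ℝ) ^ 4 := by push_cast; ring
      have h4 : (r : ℝ) ^ 4 ≤ 16 ^ r := by
        have hr2 : (r : ℝ) ≤ 2 ^ r := by
          exact_mod_cast (Nat.lt_two_pow_self (n := r)).le
        calc (r : ℝ) ^ 4 ≤ ((2 : ℝ) ^ r) ^ 4 := pow_le_pow_left₀ (Nat.cast_nonneg r) hr2 4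
          _ = 16 ^ r := by rw [← pow_mul, mul_comm, pow_mul]; norm_num
      calc ((3 * r : ℕ) : ℝ) ^ k ≤ 81 * (r : ℝ) ^ 4 := by rw [← h3]; exact h2
        _ ≤ 81 * 16 ^ r := by nlinarith
  have hdesc : (((3 * r).descFactorial k : ℕ) : ℝ) ≤ ((3 * r : ℕ) : ℝ) ^ k := by
    exact_mod_cast Nat.descFactorial_le_pow (3 * r) k
  have hMy : |y| ^ (3 * r - k) ≤ M ^ (3 * r) :=
    le_trans (pow_le_pow_left₀ (abs_nonneg y) hy _) (pow_le_pow_right₀ hM (Nat.sub_le _ _))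
  have hnum : |((3 * r).descFactorial k : ℝ) * y ^ (3 * r - k)| ≤ 81 * (16 * M ^ 3) ^ r := by
    rw [abs_mul, abs_pow, Nat.abs_cast]
    calc (((3 * r).descFactorial k : ℕ) : ℝ) * |y| ^ (3 * r - k)
        ≤ (((3 * r : ℕ) : ℝ) ^ k) * M ^ (3 * r) := by
          apply mul_le_mul hdesc hMy (pow_nonneg (abs_nonneg y) _)
          positivity
      _ ≤ (81 * 16 ^ r) * M ^ (3 * r) := by
          apply mul_le_mul_of_nonneg_right hpow (pow_nonneg hM0 _)
      _ = 81 * (16 * M ^ 3) ^ r := by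
          rw [mul_pow, pow_mul, mul_assoc]
  have hfac1 : (1 : ℝ) ≤ (r.factorial : ℝ) := by exact_mod_cast r.factorial_pos
  have hden : (27 : ℝ) ^ r * (r.factorial : ℝ) ≤ 27 ^ r * (r.factorial : ℝ) ^ 3 := by
    exact mul_le_mul_of_nonneg_left (le_self_pow₀ hfac1 (by norm_num)) (by positivity)
  have hdpos : (0 : ℝ) < 27 ^ r * (r.factorial : ℝ) := by positivity
  calc ‖remodF k r y‖
      = |((3 * r).descFactorial k : ℝ) * y ^ (3 * r - k)| / (27 ^ r * (r.factorial : ℝ) ^ 3) := by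
        rw [remodF, Real.norm_eq_abs, abs_div]
        congr 1
        exact abs_of_pos (by positivity)
    _ ≤ (81 * (16 * M ^ 3) ^ r) / (27 ^ r * (r.factorial : ℝ)) :=
        div_le_div₀ (by positivity) hnum hdpos hden
    _ = 81 * (16 * M ^ 3 / 27) ^ r / r.factorial := by
        rw [div_pow]
        field_simp

lemma remod_summable_bound (M : ℝ) :
    Summable (fun r : ℕ => 81 * (16 * M ^ 3 / 27) ^ r / r.factorial) := by
  have := (Real.summable_pow_div_factorial (16 * M ^ 3 / 27)).mul_left 81
  simpa [mul_div_assoc] using this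

lemma remodF_summable {k : ℕ} (hk : k ≤ 4) (x : ℝ) :
    Summable (fun r => remodF k r x) := by
  set M : ℝ := max |x| 1 with hMdef
  have hM : 1 ≤ M := le_max_right _ _
  have hx : |x| ≤ M := le_max_left _ _
  exact (remod_summable_bound M).of_norm_bounded (fun r => remodF_bound hk hM hx r)

lemma remod_hasDerivAt {k : ℕ} (hk : k ≤ 3) (x : ℝ) :
    HasDerivAt (fun y => ∑' r, remodF k r y) (∑' r, remodF (k + 1) r x) x := by
  set M : ℝ := |x| + 1 with hMdef
  have hM : 1 ≤ M := by rw [hMdef]; linarith [abs_nonneg x]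
  have hxmem : x ∈ Metric.ball (0 : ℝ) M := by
    rw [Metric.mem_ball, Real.dist_eq, sub_zero, hMdef]
    linarith
  refine hasDerivAt_tsum_of_isPreconnected (remod_summable_bound M) Metric.isOpen_ball
      ((convex_ball (0 : ℝ) M).isPreconnected)
      (fun r y _ => remodF_hasDerivAt k r y)
      (fun r y hy => ?_) hxmem (remodF_summable (by omega) x) hxmem
  have hy' : |y| ≤ M := by
    have := Metric.mem_ball.mp hy
    rw [Real.dist_eq, sub_zero] at this
    linarith
  exact remodF_bound (by omega) hM hy' r

lemma remod3_eq (x : ℝ) : remod3 x = ∑' r, remodF 0 r x := by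
  unfold remod3 remodF
  apply tsum_congr
  intro r
  rw [Nat.descFactorial_zero, Nat.sub_zero, Nat.cast_one, one_mul, div_pow,
    show ((3 : ℝ) ^ (3 * r) = 27 ^ r) from by rw [pow_mul]; norm_num, div_div]

lemma remod3_deriv_eq (k : ℕ) (hk : k ≤ 3) :
    iteratedDeriv k remod3 = fun x => ∑' r, remodF k r x := by
  induction k with
  | zero => simpa [iteratedDeriv_zero] using funext remod3_eq
  | succ n ih =>
    rw [iteratedDeriv_succ, ih (by omega)]
    funext y
    exact (remod_hasDerivAt (by omega) y).deriv

lemma remodF_shift (x : ℝ) (s : ℕ) :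
    x ^ 2 * remodF 3 (s + 1) x + 3 * x * remodF 2 (s + 1) x + remodF 1 (s + 1) x
      = x ^ 2 * remodF 0 s x := by
  unfold remodF
  have e1 : 3 * (s + 1) - 3 = 3 * s := by omega
  have e2 : 3 * (s + 1) - 2 = 3 * s + 1 := by omega
  have e3 : 3 * (s + 1) - 1 = 3 * s + 2 := by omega
  have d3 : ((3 * (s + 1)).descFactorial 3 : ℝ) = (3 * s + 1) * (3 * s + 2) * (3 * s + 3) := by
    simp only [Nat.descFactorial_succ, Nat.descFactorial_zero, Nat.mul_one]
    have h1 : 3 * (s + 1) - 2 = 3 * s + 1 := by omega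
    have h2 : 3 * (s + 1) - 1 = 3 * s + 2 := by omega
    have h3 : 3 * (s + 1) = 3 * s + 3 := by omega
    rw [h1, h2, h3]
    push_cast
    ring
  have d2 : ((3 * (s + 1)).descFactorial 2 : ℝ) = (3 * s + 2) * (3 * s + 3) := by
    simp only [Nat.descFactorial_succ, Nat.descFactorial_zero, Nat.mul_one]
    have h2 : 3 * (s + 1) - 1 = 3 * s + 2 := by omega
    have h3 : 3 * (s + 1) = 3 * s + 3 := by omega
    rw [h2, h3]
    push_cast
    ring
  have d1 : ((3 * (s + 1)).descFactorial 1 : ℝ) = (3 * s + 3) := by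
    simp only [Nat.descFactorial_succ, Nat.descFactorial_zero, Nat.mul_one]
    have h3 : 3 * (s + 1) = 3 * s + 3 := by omega
    rw [h3]
    push_cast
    ring
  rw [e1, e2, e3, d1, d2, d3, Nat.descFactorial_zero, Nat.sub_zero, Nat.factorial_succ]
  have hfac : ((s.factorial : ℝ)) ≠ 0 := by exact_mod_cast s.factorial_pos.ne'
  have hs1 : ((s : ℝ) + 1) ≠ 0 := by positivity
  have h27 : ((27 : ℝ) ^ s) ≠ 0 := by positivity
  rw [pow_succ]
  push_cast
  field_simp
  ring

lemma remodF_zero_term (x : ℝ) :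
    x ^ 2 * remodF 3 0 x + 3 * x * remodF 2 0 x + remodF 1 0 x = 0 := by
  simp [remodF, Nat.descFactorial]

theorem remod3_ode (x : ℝ) :
    x ^ 2 * iteratedDeriv 3 remod3 x + 3 * x * iteratedDeriv 2 remod3 x
      + deriv remod3 x - x ^ 2 * remod3 x = 0 := by
  have h1 : deriv remod3 x = ∑' r, remodF 1 r x := by
    have := remod3_deriv_eq 1 (by omega)
    rw [iteratedDeriv_one] at this
    exact congrFun this x
  rw [remod3_deriv_eq 3 (by omega), remod3_deriv_eq 2 (by omega), h1, remod3_eq]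
  have s3 := (remodF_summable (k := 3) (by omega) x).mul_left (x ^ 2)
  have s2 := (remodF_summable (k := 2) (by omega) x).mul_left (3 * x)
  have s1 := remodF_summable (k := 1) (by omega) x
  have key : (∑' r, (x ^ 2 * remodF 3 r x + 3 * x * remodF 2 r x + remodF 1 r x))
      = ∑' r, x ^ 2 * remodF 0 r x := by
    rw [Summable.tsum_eq_zero_add ((s3.add s2).add s1)]
    simp only [remodF_shift, remodF_zero_term, zero_add]
  calc x ^ 2 * (∑' r, remodF 3 r x) + 3 * x * (∑' r, remodF 2 r x) + (∑' r, remodF 1 r x)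
        - x ^ 2 * (∑' r, remodF 0 r x)
      = (∑' r, (x ^ 2 * remodF 3 r x + 3 * x * remodF 2 r x + remodF 1 r x))
        - ∑' r, x ^ 2 * remodF 0 r x := by
        rw [← tsum_mul_left (a := x ^ 2) (f := fun r => remodF 3 r x),
          ← tsum_mul_left (a := 3 * x) (f := fun r => remodF 2 r x),
          ← tsum_mul_left (a := x ^ 2) (f := fun r => remodF 0 r x),
          ← Summable.tsum_add s3 s2, ← Summable.tsum_add (s3.add s2) s1]
    _ = 0 := by rw [key, sub_self]
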